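/- Assume G has no cycle of length shorter than g, where g is an even integer, that ρ satisfies 1 ≤ ρ < 1/(1−Δ), that for every integer d ≥ 1 and every pair of vertices x, y of G the number of simple paths of length d from x to y is at most ρ^d, and that g ≥ 2⌈(2 log(Δ/2) + log(1−ρ(1−Δ))) / log(ρ(1−Δ))⌉. Then for any pair of adjacent vertices u, v of G and any vertex w ∉ {u,v}, the probability that v ∈ A(u) and w ∉ A(u) is at least 7Δ²/8. -/

import Mathlib

open MeasureTheory ProbabilityTheory

/-- A walk is *active* if every dart `(a,b)` it traverses has its event `X (a,b)` occurring. -/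
def SimpleGraph.Walk.Active {V : Type*} {G : SimpleGraph V} {Ω : Type*}
    (X : V × V → Set Ω) {u v : V} (p : G.Walk u v) (ω : Ω) : Prop :=
  ∀ d ∈ p.darts, ω ∈ X d.toProd

/-- The infected set with seed `u`: `u` itself together with every vertex reachable
from `u` by an active path. -/
def SimpleGraph.infected {V : Type*} (G : SimpleGraph V) {Ω : Type*}
    (X : V × V → Set Ω) (u : V) (ω : Ω) : Set V :=
  {w | w = u ∨ ∃ p : G.Walk u w, p.IsPath ∧ p.Active X ω}

open SimpleGraph Walk in
/-- Two distinct paths between the same pair of vertices yield a cycle of length at most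
the sum of their lengths. -/
lemma SimpleGraph.exists_cycle_of_two_paths {V : Type*} {G : SimpleGraph V} :
    ∀ {v w : V} (p : G.Walk v w), p.IsPath → ∀ (q : G.Walk v w), q.IsPath → p ≠ q →
      ∃ (x : V) (c : G.Walk x x), c.IsCycle ∧ c.length ≤ p.length + q.length := by
  classical
  intro v w p
  induction p with
  | nil =>
    intro _ q hq hne
    exact absurd (Walk.isPath_iff_eq_nil.mp hq).symm hne
  | @cons v v' w ph p ih =>
    intro hp q hq hne
    by_cases he : s(v, v') ∈ (q.append p.reverse).edges
    · -- the edge occurs in q or in p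
      rw [Walk.edges_append, List.mem_append] at he
      rcases he with he | he
      · -- edge in q : mimic mathlib's argument
        cases q with
        | nil => simp at he
        | @cons _ v'' _ qh q' =>
          rw [Walk.cons_isPath_iff] at hp hq
          simp only [Walk.edges_cons, List.mem_cons, Sym2.eq_iff] at he
          rcases he with (⟨-, rfl⟩ | ⟨rfl, rfl⟩) | he
          · -- same first edge
            have hne' : p ≠ q' := by rintro rfl; exact hne rfl
            obtain ⟨x, c, hc, hlen⟩ := ih hp.1 q' hq.1 hne'
            exact ⟨x, c, hc, by simp only [Walk.length_cons]; omega⟩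
          · exact absurd (Walk.start_mem_support q') hq.2
          · exact absurd (Walk.fst_mem_support_of_mem_edges _ he) hq.2
      · rw [Walk.edges_reverse, List.mem_reverse] at he
        rw [Walk.cons_isPath_iff] at hp
        exact absurd (Walk.fst_mem_support_of_mem_edges _ he) hp.2
    · -- the edge is on no walk from v to v' within q.append p.reverse: build a cycle
      set W : G.Walk v v' := q.append p.reverse with hW
      have hbp : W.bypass.IsPath := Walk.bypass_isPath W
      have hnotin : s(v, v') ∉ W.bypass.edges := fun h => he (Walk.edges_bypass_subset W h)
      refine ⟨v', Walk.cons ph.symm W.bypass, ?_, ?_⟩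
      · refine SimpleGraph.Path.cons_isCycle (⟨W.bypass, hbp⟩ : G.Path v v') ph.symm ?_
        rwa [Sym2.eq_swap]
      · have h1 : W.bypass.length ≤ W.length := Walk.length_bypass_le W
        have h2 : W.length = q.length + p.length := by simp [hW]
        simp only [Walk.length_cons]
        omega

lemma geom_tail_le {r : ℝ} (h0 : 0 ≤ r) (h1 : r < 1) (k N : ℕ) :
    ∑ d ∈ Finset.Icc k N, r ^ d ≤ r ^ k / (1 - r) := by
  rw [← Finset.Ico_add_one_right_eq_Icc, Finset.sum_Ico_eq_sum_range]
  simp_rw [pow_add]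
  rw [← Finset.mul_sum]
  have h2 : ∑ i ∈ Finset.range (N + 1 - k), r ^ i ≤ (1 - r)⁻¹ := by
    refine le_trans (Summable.sum_le_tsum (L := SummationFilter.unconditional ℕ) _ (fun i _ => by positivity) ?_) ?_
    · exact summable_geometric_of_lt_one h0 h1
    · rw [tsum_geometric_of_lt_one h0 h1]
  rw [div_eq_mul_inv]
  exact mul_le_mul_of_nonneg_left h2 (by positivity)

lemma short_case_num {Δ r : ℝ} (hΔ0 : 0 < Δ) (hΔ2 : Δ ≤ 1/2) (hrβ : 1 - Δ ≤ r) (hr1 : r < 1)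
    {s t : ℕ} (hs : 1 ≤ s) (ht : 1 ≤ t) (hkey : r ^ (s + t + 1) ≤ (Δ/2)^2 * (1-r)) :
    (1-Δ)^s + Δ^2/2 * r^t ≤ 1 - 7*Δ/8 := by
  set β : ℝ := 1 - Δ with hβ
  have hβ0 : 0 ≤ β := by simp only [hβ]; linarith
  have hβ1 : β ≤ 1 := by simp only [hβ]; linarith
  have hr0 : (0:ℝ) ≤ r := le_trans hβ0 hrβ
  have hrhalf : 1/2 ≤ r := le_trans (by simp only [hβ]; linarith) hrβ
  have hr0' : (0:ℝ) < r := lt_of_lt_of_le one_half_pos hrhalf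
  have h1r : 1 - r ≤ Δ := by linarith
  have hpow : β ^ s * r ^ t ≤ Δ^3 / 2 := by
    have e1 : β ^ s * r ^ t * r ≤ r ^ (s + t + 1) := by
      have hb : β ^ s ≤ r ^ s := pow_le_pow_left₀ hβ0 hrβ s
      calc β ^ s * r ^ t * r ≤ r ^ s * r ^ t * r := by
            apply mul_le_mul_of_nonneg_right (mul_le_mul_of_nonneg_right hb (by positivity)) hr0
        _ = r ^ (s + t + 1) := by ring
    have e2 : β ^ s * r ^ t * r ≤ (Δ/2)^2 * Δ := by
      refine le_trans e1 (le_trans hkey ?_)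
      exact mul_le_mul_of_nonneg_left h1r (by positivity)
    have e3 : β ^ s * r ^ t ≤ (Δ/2)^2 * Δ / r := by
      rw [le_div_iff₀ hr0']; exact e2
    have e4 : (Δ/2)^2 * Δ / r ≤ (Δ/2)^2 * Δ / (1/2) := by
      apply div_le_div_of_nonneg_left (by positivity) one_half_pos hrhalf
    have e5 : (Δ/2)^2 * Δ / (1/2 : ℝ) = Δ^3/2 := by ring
    linarith
  have hrt1 : r ^ t ≤ 1 := pow_le_one₀ hr0 (le_of_lt hr1)
  have hβs : β ^ s ≤ β := by
    calc β ^ s ≤ β ^ 1 := pow_le_pow_of_le_one hβ0 hβ1 hs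
      _ = β := pow_one β
  by_cases hc : β ^ s ≤ Δ^3
  · nlinarith [pow_nonneg hr0 t]
  · push_neg at hc
    have hΔ3 : (0:ℝ) < Δ^3 := by positivity
    have hrt : r ^ t ≤ 1/2 := by
      have h6 : r ^ t * Δ^3 ≤ Δ^3 / 2 := by
        calc r ^ t * Δ^3 ≤ r ^ t * β ^ s := by
              apply mul_le_mul_of_nonneg_left (le_of_lt hc) (pow_nonneg hr0 t)
          _ = β ^ s * r ^ t := by ring
          _ ≤ Δ^3/2 := hpow
      have h7 : r ^ t ≤ Δ^3/2 / Δ^3 := by rw [le_div_iff₀ hΔ3]; exact h6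
      have h8 : Δ^3/2/Δ^3 = (1:ℝ)/2 := by field_simp
      linarith
    nlinarith

lemma no_short_num {Δ : ℝ} (hΔ0 : 0 < Δ) (hΔ2 : Δ ≤ 1/2) : Δ^2/2 ≤ 1 - 7*Δ/8 := by nlinarith

lemma key_pow_bound {Δ ρ b : ℝ} (hΔ0 : 0 < Δ) (hΔ1 : Δ < 1) (hρ1 : 1 ≤ ρ)
    (hρΔ : ρ < 1 / (1 - Δ)) (hb : 1 < b) {m : ℕ}
    (hm : (2 * Real.logb b (Δ / 2) + Real.logb b (1 - ρ * (1 - Δ))) /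
        Real.logb b (ρ * (1 - Δ)) ≤ (m : ℝ)) :
    (ρ * (1-Δ))^m ≤ (Δ/2)^2 * (1 - ρ*(1-Δ)) := by
  set r : ℝ := ρ * (1 - Δ) with hr
  have hΔ' : 0 < 1 - Δ := by linarith
  have hr0 : 0 < r := by
    have : (0:ℝ) < ρ := lt_of_lt_of_le one_pos hρ1
    exact mul_pos this hΔ'
  have hr1 : r < 1 := by
    have := (mul_lt_mul_of_pos_right hρΔ hΔ').trans_eq (one_div_mul_cancel (ne_of_gt hΔ'))
    simpa [hr] using this
  have hden : Real.logb b r < 0 := Real.logb_neg hb hr0 hr1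
  have hnum : (m:ℝ) * Real.logb b r ≤
      2 * Real.logb b (Δ / 2) + Real.logb b (1 - r) :=
    (div_le_iff_of_neg hden).mp hm
  have h2 : (2:ℝ) * Real.logb b (Δ / 2) = Real.logb b ((Δ/2)^2) := by
    rw [Real.logb_pow]; norm_num
  have h3 : Real.logb b ((Δ/2)^2) + Real.logb b (1 - r) =
      Real.logb b ((Δ/2)^2 * (1 - r)) := by
    rw [Real.logb_mul (by positivity) (by intro h; nlinarith [hr1])]
  have h4 : Real.logb b (r ^ m) = (m:ℝ) * Real.logb b r := Real.logb_pow b r m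
  have h5 : Real.logb b (r ^ m) ≤ Real.logb b ((Δ/2)^2 * (1 - r)) := by
    rw [h4]; rw [h2, h3] at hnum; exact hnum
  have h1r : (0:ℝ) < 1 - r := by linarith
  exact (Real.logb_le_logb hb (by positivity) (by positivity)).mp h5

/-- under the girth / path-growth assumptions, for adjacent vertices `u, v`
and any third vertex `w`, the probability that `v` is infected but `w` is not infected
(with seed `u`) is at least `7Δ²/8`. -/
theorem prob_adjacent_infected_not_w
    {V : Type*} [Fintype V] (G : SimpleGraph V)
    {Ω : Type*} [MeasureSpace Ω] [IsProbabilityMeasure (ℙ : Measure Ω)]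
    (Δ : ℝ) (hΔ0 : 0 < Δ) (hΔ2 : Δ ≤ 1 / 2)
    (X : V × V → Set Ω)
    (hindep : iIndepSet (fun e : {q : V × V // G.Adj q.1 q.2} => X e.1) ℙ)
    (hbounds : ∀ a b : V, G.Adj a b →
      ENNReal.ofReal Δ ≤ ℙ (X (a, b)) ∧ ℙ (X (a, b)) ≤ ENNReal.ofReal (1 - Δ))
    (g : ℕ) (hgeven : Even g)
    (hcycle : ∀ (x : V) (c : G.Walk x x), c.IsCycle → g ≤ c.length)
    (ρ : ℝ) (hρ1 : 1 ≤ ρ) (hρΔ : ρ < 1 / (1 - Δ))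
    (hpaths : ∀ d : ℕ, 1 ≤ d → ∀ x y : V,
      (Nat.card {p : G.Walk x y // p.IsPath ∧ p.length = d} : ℝ) ≤ ρ ^ d)
    (b : ℝ) (hb : 1 < b)
    (hg : 2 * ⌈(2 * Real.logb b (Δ / 2) + Real.logb b (1 - ρ * (1 - Δ))) /
        Real.logb b (ρ * (1 - Δ))⌉ ≤ (g : ℤ))
    (u v w : V) (huv : G.Adj u v) (hwu : w ≠ u) (hwv : w ≠ v) :
    ENNReal.ofReal (7 * Δ ^ 2 / 8)
      ≤ ℙ {ω | v ∈ G.infected X u ω ∧ w ∉ G.infected X u ω} := by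
  classical
  letI : DecidableRel G.Adj := Classical.decRel _
  have hΔ1 : Δ < 1 := lt_of_le_of_lt hΔ2 (by norm_num)
  have hβ0 : (0:ℝ) < 1 - Δ := by linarith
  have hβhalf : (1:ℝ)/2 ≤ 1 - Δ := by linarith
  have hρ0 : (0:ℝ) < ρ := lt_of_lt_of_le one_pos hρ1
  have hr0 : (0:ℝ) < ρ * (1 - Δ) := mul_pos hρ0 hβ0
  have hr1 : ρ * (1 - Δ) < 1 := by
    have := (mul_lt_mul_of_pos_right hρΔ hβ0).trans_eq (one_div_mul_cancel (ne_of_gt hβ0))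
    simpa using this
  have hrβ : 1 - Δ ≤ ρ * (1 - Δ) := by nlinarith
  -- extract m with g = 2 * m and the key power bound
  obtain ⟨m, hg2m⟩ : ∃ m : ℕ, g = 2 * m := by
    obtain ⟨m, hm⟩ := hgeven; exact ⟨m, by omega⟩
  have hmR : (2 * Real.logb b (Δ / 2) + Real.logb b (1 - ρ * (1 - Δ))) /
      Real.logb b (ρ * (1 - Δ)) ≤ (m : ℝ) := by
    have h1 : (⌈(2 * Real.logb b (Δ / 2) + Real.logb b (1 - ρ * (1 - Δ))) /
        Real.logb b (ρ * (1 - Δ))⌉ : ℤ) ≤ (m : ℤ) := by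
      have hgz : ((g:ℕ) : ℤ) = 2 * (m : ℤ) := by exact_mod_cast hg2m
      rw [hgz] at hg
      omega
    exact_mod_cast Int.ceil_le.mp h1
  have hkeym : (ρ * (1-Δ))^m ≤ (Δ/2)^2 * (1 - ρ*(1-Δ)) :=
    key_pow_bound hΔ0 hΔ1 hρ1 hρΔ hb hmR
  -- the index type of edge events
  set ι := {q : V × V // G.Adj q.1 q.2} with hι
  let i0 : ι := ⟨(u, v), huv⟩
  -- the type of paths from u to w
  let P := {p : G.Walk u w // p.IsPath}
  haveI : Fintype P := Fintype.ofEquiv {p : G.Walk u w // p.IsPath ∧ p.length < Fintype.card V}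
    { toFun := fun p => ⟨p.1, p.2.1⟩
      invFun := fun p => ⟨p.1, p.2, p.2.length_lt⟩
      left_inv := fun p => rfl
      right_inv := fun p => rfl }
  -- dart index sets and events
  let DF : G.Walk u w → Finset ι := fun p =>
    (p.darts.map (fun d => (⟨d.toProd, d.adj⟩ : ι))).toFinset
  let S : P → Finset ι := fun p => DF p.1 \ {i0}
  let E : P → Set Ω := fun p => ⋂ i ∈ S p, X (i.1)
  -- basic facts about lengths
  have hlen1 : ∀ p : P, 1 ≤ p.1.length := by
    intro p
    by_contra h
    have h0 : p.1.length = 0 := by omega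
    exact hwu (SimpleGraph.Walk.eq_of_length_eq_zero h0).symm
  have hlenlt : ∀ p : P, p.1.length < Fintype.card V := fun p => p.2.length_lt
  -- cardinality of dart sets
  have hDFcard : ∀ (q : G.Walk u w), q.IsPath → (DF q).card = q.length := by
    intro q hq
    have hnd : (q.darts.map (fun d => (⟨d.toProd, d.adj⟩ : ι))).Nodup := by
      refine List.Nodup.map ?_
        (SimpleGraph.Walk.darts_nodup_of_support_nodup hq.support_nodup)
      intro d1 d2 h
      apply SimpleGraph.Dart.toProd_injective
      simpa using h
    rw [List.toFinset_card_of_nodup hnd, List.length_map, SimpleGraph.Walk.length_darts]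
  have hmemDF : ∀ (q : G.Walk u w) (i : ι), i ∈ DF q ↔ ∃ d ∈ q.darts, d.toProd = i.1 := by
    intro q i
    simp only [DF, List.mem_toFinset, List.mem_map]
    constructor
    · rintro ⟨d, hd, rfl⟩; exact ⟨d, hd, rfl⟩
    · rintro ⟨d, hd, hdi⟩; exact ⟨d, hd, Subtype.ext hdi⟩
  -- lower bounds on card (S p)
  have hScard_ge : ∀ p : P, p.1.length - 1 ≤ (S p).card := by
    intro p
    have h1 : DF p.1 ⊆ insert i0 (S p) := by
      intro i hi
      by_cases h : i = i0
      · simp [h]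
      · exact Finset.mem_insert_of_mem (Finset.mem_sdiff.mpr ⟨hi, by simpa using h⟩)
    have h2 := Finset.card_le_card h1
    have h3 := Finset.card_insert_le i0 (S p)
    have h4 := hDFcard p.1 p.2
    omega
  have hScard_one : ∀ p : P, 1 ≤ (S p).card := by
    intro p
    by_cases h : i0 ∈ DF p.1
    · -- then v is on the path, so the path has length ≥ 2
      obtain ⟨d, hd, hdi⟩ := (hmemDF p.1 i0).mp h
      have hv : v ∈ p.1.support := by
        have := SimpleGraph.Walk.dart_snd_mem_support_of_mem_darts p.1 hd
        rw [hdi] at this; exact this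
      have hlen2 : 2 ≤ p.1.length := by
        have hspec := SimpleGraph.Walk.take_spec p.1 hv
        have hlen := congrArg SimpleGraph.Walk.length hspec
        rw [SimpleGraph.Walk.length_append] at hlen
        have h5 : 1 ≤ (p.1.takeUntil v hv).length := by
          by_contra h6
          have h7 : (p.1.takeUntil v hv).length = 0 := by omega
          exact (huv.ne) (SimpleGraph.Walk.eq_of_length_eq_zero h7)
        have h6 : 1 ≤ (p.1.dropUntil v hv).length := by
          by_contra h6
          have h7 : (p.1.dropUntil v hv).length = 0 := by omega
          exact hwv (SimpleGraph.Walk.eq_of_length_eq_zero h7).symm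
        omega
      have := hScard_ge p
      omega
    · have : S p = DF p.1 := Finset.sdiff_eq_self_of_disjoint (by simpa using h)
      rw [this, hDFcard p.1 p.2]
      exact hlen1 p
  -- counting paths of a given length
  have hcount : ∀ d : ℕ, 1 ≤ d →
      ((Finset.univ.filter (fun p : P => p.1.length = d)).card : ℝ) ≤ ρ ^ d := by
    intro d hd
    refine le_trans ?_ (hpaths d hd u w)
    have h1 : (Finset.univ.filter (fun p : P => p.1.length = d)).card =
        Fintype.card {p : P // p.1.length = d} := (Fintype.card_subtype _).symm
    have h2 : Nat.card {p : G.Walk u w // p.IsPath ∧ p.length = d} =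
        Fintype.card {p : G.Walk u w // p.IsPath ∧ p.length = d} := Nat.card_eq_fintype_card
    have h3 : Fintype.card {p : P // p.1.length = d} ≤
        Fintype.card {p : G.Walk u w // p.IsPath ∧ p.length = d} := by
      apply Fintype.card_le_of_injective (fun x => ⟨x.1.1, x.1.2, x.2⟩)
      intro x y hxy
      simp only [Subtype.mk.injEq] at hxy
      exact Subtype.ext (Subtype.ext hxy)
    rw [h1, h2]
    exact_mod_cast h3
  -- generic tail-sum bound
  have hsum_le : ∀ (s : Finset P) (k : ℕ), 1 ≤ k → (∀ p ∈ s, k ≤ p.1.length) →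
      ∑ p ∈ s, (1-Δ) ^ (S p).card ≤ 2 * (ρ*(1-Δ))^k / (1 - ρ*(1-Δ)) := by
    intro s k hk hks
    have step1 : ∑ p ∈ s, (1-Δ) ^ (S p).card ≤ ∑ p ∈ s, (1-Δ) ^ (p.1.length - 1) := by
      refine Finset.sum_le_sum (fun p _ => ?_)
      exact pow_le_pow_of_le_one (by linarith) (by linarith) (hScard_ge p)
    have step2 : ∑ p ∈ s, (1-Δ) ^ (p.1.length - 1) =
        ∑ d ∈ Finset.Icc k (Fintype.card V),
          ∑ p ∈ s.filter (fun p : P => p.1.length = d), (1-Δ) ^ (p.1.length - 1) :=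
      (Finset.sum_fiberwise_of_maps_to (fun p hp => Finset.mem_Icc.mpr
        ⟨hks p hp, le_of_lt (hlenlt p)⟩) _).symm
    have step3 : ∑ d ∈ Finset.Icc k (Fintype.card V),
          ∑ p ∈ s.filter (fun p : P => p.1.length = d), (1-Δ) ^ (p.1.length - 1)
        ≤ ∑ d ∈ Finset.Icc k (Fintype.card V), (ρ*(1-Δ))^d / (1-Δ) := by
      refine Finset.sum_le_sum (fun d hd => ?_)
      have hd1 : 1 ≤ d := le_trans hk (Finset.mem_Icc.mp hd).1
      have e1 : ∑ p ∈ s.filter (fun p : P => p.1.length = d), (1-Δ) ^ (p.1.length - 1)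
          = ∑ _p ∈ s.filter (fun p : P => p.1.length = d), (1-Δ) ^ (d - 1) := by
        refine Finset.sum_congr rfl (fun p hp => ?_)
        rw [(Finset.mem_filter.mp hp).2]
      rw [e1, Finset.sum_const, nsmul_eq_mul]
      have e2 : ((s.filter (fun p : P => p.1.length = d)).card : ℝ) ≤ ρ ^ d := by
        refine le_trans ?_ (hcount d hd1)
        exact_mod_cast Finset.card_le_card
          (Finset.filter_subset_filter _ (Finset.subset_univ s))
      have e3 : (ρ*(1-Δ))^d / (1-Δ) = ρ^d * (1-Δ)^(d-1) := by
        have e4 : (1-Δ)^d = (1-Δ)^(d-1) * (1-Δ) := by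
          rw [← pow_succ]; congr 1; omega
        rw [mul_pow, e4]
        field_simp
      rw [e3]
      exact mul_le_mul_of_nonneg_right e2 (by positivity)
    have step4 : ∑ d ∈ Finset.Icc k (Fintype.card V), (ρ*(1-Δ))^d / (1-Δ)
        ≤ 2 * (ρ*(1-Δ))^k / (1 - ρ*(1-Δ)) := by
      rw [← Finset.sum_div]
      have e5 := geom_tail_le (le_of_lt hr0) hr1 k (Fintype.card V)
      have e6 : (0:ℝ) < 1 - ρ*(1-Δ) := by linarith
      have e7 : (0:ℝ) ≤ (ρ*(1-Δ))^k / (1 - ρ*(1-Δ)) := by positivity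
      calc (∑ d ∈ Finset.Icc k (Fintype.card V), (ρ*(1-Δ))^d) / (1-Δ)
          ≤ ((ρ*(1-Δ))^k / (1 - ρ*(1-Δ))) / (1-Δ) := by
            exact div_le_div_of_nonneg_right e5 hβ0.le
        _ ≤ ((ρ*(1-Δ))^k / (1 - ρ*(1-Δ))) * 2 := by
            rw [div_eq_mul_inv]
            refine mul_le_mul_of_nonneg_left ?_ e7
            rw [inv_le_comm₀ hβ0 (by norm_num)]
            linarith
        _ = 2 * (ρ*(1-Δ))^k / (1 - ρ*(1-Δ)) := by ring
    linarith
  -- the main real-valued estimate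
  have hmain : ∑ p : P, (1-Δ) ^ (S p).card ≤ 1 - 7*Δ/8 := by
    by_cases hshort : ∃ p : P, p.1.length < m
    · obtain ⟨p0, hp0⟩ := hshort
      have ha1 : 1 ≤ p0.1.length := hlen1 p0
      have hm2 : 2 ≤ m := by omega
      have hothers : ∀ p : P, p ≠ p0 → m + (m - p0.1.length) ≤ p.1.length := by
        intro p hne
        obtain ⟨x, c, hc, hlc⟩ := SimpleGraph.exists_cycle_of_two_paths p.1 p.2 p0.1 p0.2
          (fun h => hne (Subtype.ext h))
        have := hcycle x c hc
        omega
      rw [← Finset.sum_erase_add _ _ (Finset.mem_univ p0)]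
      have h1 := hsum_le (Finset.univ.erase p0) (m + (m - p0.1.length)) (by omega)
        (fun p hp => hothers p (Finset.ne_of_mem_erase hp))
      have h2 : 2 * (ρ*(1-Δ))^(m + (m - p0.1.length)) / (1 - ρ*(1-Δ))
          ≤ Δ^2/2 * (ρ*(1-Δ))^(m - p0.1.length) := by
        rw [pow_add]
        have e6 : (0:ℝ) < 1 - ρ*(1-Δ) := by linarith
        rw [div_le_iff₀ e6] at *
        calc 2 * ((ρ*(1-Δ))^m * (ρ*(1-Δ))^(m - p0.1.length))
            ≤ 2 * (((Δ/2)^2 * (1 - ρ*(1-Δ))) * (ρ*(1-Δ))^(m - p0.1.length)) := by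
              refine mul_le_mul_of_nonneg_left ?_ (by norm_num)
              exact mul_le_mul_of_nonneg_right hkeym (by positivity)
          _ = Δ^2/2 * (ρ*(1-Δ))^(m - p0.1.length) * (1 - ρ*(1-Δ)) := by ring
      have h3 : (1-Δ) ^ (S p0).card + Δ^2/2 * (ρ*(1-Δ))^(m - p0.1.length) ≤ 1 - 7*Δ/8 := by
        refine short_case_num hΔ0 hΔ2 hrβ hr1 (hScard_one p0) (by omega) ?_
        have e8 : m ≤ (S p0).card + (m - p0.1.length) + 1 := by
          have := hScard_ge p0
          omega
        calc (ρ*(1-Δ))^((S p0).card + (m - p0.1.length) + 1) ≤ (ρ*(1-Δ))^m :=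
              pow_le_pow_of_le_one (le_of_lt hr0) (le_of_lt hr1) e8
          _ ≤ (Δ/2)^2 * (1 - ρ*(1-Δ)) := hkeym
      linarith
    · push_neg at hshort
      have h1 := hsum_le Finset.univ (max m 1) (le_max_right m 1)
        (fun p _ => max_le (hshort p) (hlen1 p))
      have h2 : 2 * (ρ*(1-Δ))^(max m 1) / (1 - ρ*(1-Δ)) ≤ Δ^2/2 := by
        have e6 : (0:ℝ) < 1 - ρ*(1-Δ) := by linarith
        rw [div_le_iff₀ e6]
        calc 2 * (ρ*(1-Δ))^(max m 1)
            ≤ 2 * (ρ*(1-Δ))^m := by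
              refine mul_le_mul_of_nonneg_left ?_ (by norm_num)
              exact pow_le_pow_of_le_one (le_of_lt hr0) (le_of_lt hr1) (le_max_left m 1)
          _ ≤ 2 * ((Δ/2)^2 * (1 - ρ*(1-Δ))) := by
              refine mul_le_mul_of_nonneg_left hkeym (by norm_num)
          _ = Δ^2/2 * (1 - ρ*(1-Δ)) := by ring
      have h3 := no_short_num hΔ0 hΔ2
      linarith
  -- measure bound for each path event
  have hprod := hindep.meas_biInter
  have hAle : ∀ i : ι, ℙ (X i.1) ≤ ENNReal.ofReal (1-Δ) := by
    intro i
    have h := (hbounds i.1.1 i.1.2 i.2).2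
    rwa [Prod.mk.eta] at h
  have hi0S : ∀ p : P, i0 ∉ S p := by
    intro p hmem
    exact (Finset.mem_sdiff.mp hmem).2 (Finset.mem_singleton_self i0)
  have hEbound : ∀ p : P, ℙ (X (u,v) ∩ E p)
      ≤ ℙ (X (u,v)) * ENNReal.ofReal ((1-Δ) ^ (S p).card) := by
    intro p
    have h1 : X (u,v) ∩ E p = ⋂ i ∈ insert i0 (S p), X i.1 := by
      rw [Finset.set_biInter_insert]
    rw [h1, hprod, Finset.prod_insert (hi0S p)]
    have h2 : ∏ i ∈ S p, ℙ (X i.1) ≤ ENNReal.ofReal ((1-Δ) ^ (S p).card) := by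
      calc ∏ i ∈ S p, ℙ (X i.1) ≤ ∏ _i ∈ S p, ENNReal.ofReal (1-Δ) :=
            Finset.prod_le_prod' (fun i _ => hAle i)
        _ = ENNReal.ofReal (1-Δ) ^ (S p).card := Finset.prod_const _
        _ = ENNReal.ofReal ((1-Δ) ^ (S p).card) := (ENNReal.ofReal_pow (by linarith) _).symm
    exact mul_le_mul_right h2 _
  -- covering of the edge event
  have hsingle : (SimpleGraph.Walk.cons huv SimpleGraph.Walk.nil).IsPath := by
    simp only [SimpleGraph.Walk.cons_isPath_iff]
    exact ⟨SimpleGraph.Walk.IsPath.nil, by simp [huv.ne]⟩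
  have hcov : X (u,v) ⊆ {ω | v ∈ G.infected X u ω ∧ w ∉ G.infected X u ω}
      ∪ ⋃ p : P, (X (u,v) ∩ E p) := by
    intro ω hω
    by_cases hw : w ∈ G.infected X u ω
    · right
      have hw' : ∃ q : G.Walk u w, q.IsPath ∧ q.Active X ω := by
        rcases hw with h | h
        · exact absurd h hwu
        · exact h
      obtain ⟨q, hq, hact⟩ := hw'
      by_cases hv : v ∈ q.support
      · have hdrop : (q.dropUntil v hv).IsPath := hq.dropUntil hv
        have hu_not : u ∉ (q.dropUntil v hv).support := by
          intro hu_mem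
          have hnd : (q.support).Nodup := hq.support_nodup
          rw [← SimpleGraph.Walk.take_spec q hv, SimpleGraph.Walk.support_append] at hnd
          have hdisj := List.disjoint_of_nodup_append hnd
          have h1 : u ∈ (q.takeUntil v hv).support := SimpleGraph.Walk.start_mem_support _
          have h2 : u ∈ (q.dropUntil v hv).support.tail := by
            have h3 := SimpleGraph.Walk.support_eq_cons (q.dropUntil v hv)
            rw [h3] at hu_mem
            rcases List.mem_cons.mp hu_mem with h4 | h4
            · exact absurd h4 huv.ne
            · exact h4
          exact hdisj h1 h2
        refine Set.mem_iUnion.mpr ⟨⟨SimpleGraph.Walk.cons huv (q.dropUntil v hv),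
          hdrop.cons hu_not⟩, hω, ?_⟩
        refine Set.mem_iInter₂.mpr (fun i hi => ?_)
        have hiDF := (Finset.mem_sdiff.mp hi).1
        have hine : i ≠ i0 := by simpa using (Finset.mem_sdiff.mp hi).2
        obtain ⟨d, hd, hdi⟩ := (hmemDF _ i).mp hiDF
        rw [SimpleGraph.Walk.darts_cons, List.mem_cons] at hd
        rcases hd with hd | hd
        · exfalso
          apply hine
          apply Subtype.ext
          rw [← hdi, hd]
        · rw [← hdi]
          exact hact d (SimpleGraph.Walk.darts_dropUntil_subset q hv hd)
      · refine Set.mem_iUnion.mpr ⟨⟨q, hq⟩, hω, ?_⟩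
        refine Set.mem_iInter₂.mpr (fun i hi => ?_)
        obtain ⟨d, hd, hdi⟩ := (hmemDF _ i).mp (Finset.mem_sdiff.mp hi).1
        rw [← hdi]
        exact hact d hd
    · left
      refine ⟨Or.inr ⟨SimpleGraph.Walk.cons huv SimpleGraph.Walk.nil, hsingle, ?_⟩, hw⟩
      intro d hd
      simp only [SimpleGraph.Walk.darts_cons, SimpleGraph.Walk.darts_nil,
        List.mem_singleton] at hd
      rw [hd]
      exact hω
  -- putting everything together
  have hXle : ℙ (X (u,v)) ≤ ℙ {ω | v ∈ G.infected X u ω ∧ w ∉ G.infected X u ω}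
      + ℙ (X (u,v)) * ENNReal.ofReal (1 - 7*Δ/8) := by
    refine le_trans (measure_mono hcov) (le_trans (measure_union_le _ _) ?_)
    refine add_le_add_right ?_ _
    refine le_trans (measure_iUnion_fintype_le ℙ _) ?_
    calc ∑ p : P, ℙ (X (u,v) ∩ E p)
        ≤ ∑ p : P, ℙ (X (u,v)) * ENNReal.ofReal ((1-Δ) ^ (S p).card) :=
          Finset.sum_le_sum (fun p _ => hEbound p)
      _ = ℙ (X (u,v)) * ∑ p : P, ENNReal.ofReal ((1-Δ) ^ (S p).card) := by
          rw [Finset.mul_sum]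
      _ ≤ ℙ (X (u,v)) * ENNReal.ofReal (1 - 7*Δ/8) := by
          refine mul_le_mul_right ?_ _
          rw [← ENNReal.ofReal_sum_of_nonneg (fun p _ => by positivity)]
          exact ENNReal.ofReal_le_ofReal hmain
  have h9 : ℙ (X (u,v)) - ℙ (X (u,v)) * ENNReal.ofReal (1 - 7*Δ/8)
      ≤ ℙ {ω | v ∈ G.infected X u ω ∧ w ∉ G.infected X u ω} :=
    tsub_le_iff_right.mpr hXle
  have h10 : ℙ (X (u,v)) * (1 - ENNReal.ofReal (1 - 7*Δ/8))
      ≤ ℙ {ω | v ∈ G.infected X u ω ∧ w ∉ G.infected X u ω} := by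
    rw [ENNReal.mul_sub (fun _ _ => measure_ne_top _ _), mul_one]
    exact h9
  have h11 : (1 : ENNReal) - ENNReal.ofReal (1 - 7*Δ/8) = ENNReal.ofReal (7*Δ/8) := by
    rw [← ENNReal.ofReal_one, ← ENNReal.ofReal_sub _ (by linarith : (0:ℝ) ≤ 1 - 7*Δ/8)]
    congr 1
    ring
  calc ENNReal.ofReal (7 * Δ^2/8) = ENNReal.ofReal Δ * ENNReal.ofReal (7*Δ/8) := by
        rw [← ENNReal.ofReal_mul hΔ0.le]
        congr 1
        ring
    _ ≤ ℙ (X (u,v)) * ENNReal.ofReal (7*Δ/8) :=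
        mul_le_mul_left (hbounds u v huv).1 _
    _ = ℙ (X (u,v)) * (1 - ENNReal.ofReal (1 - 7*Δ/8)) := by rw [h11]
    _ ≤ _ := h10
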